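/- With notation as before (0 < α < 1, λ > 0, μ > 0), lim_{n→∞} (n/μ) ∫₀^∞ e^{-sx} x m_α(x | μ/n, λ) dx = α s^{α-1}/(λ + s^α) for every s > 0; in particular the limit is finite and independent of μ. -/

import Mathlib

open MeasureTheory Real Set Filter

lemma lgm_integrable (f : ℝ → ℝ) {s α : ℝ}
    (hlap : ∫ t in Ioi (0:ℝ), Real.exp (-(s * t)) * f t = Real.exp (-(s ^ α))) :
    IntegrableOn (fun t => Real.exp (-(s * t)) * f t) (Ioi 0) := by
  by_contra h
  rw [MeasureTheory.integral_undef h] at hlap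
  exact (Real.exp_pos _).ne' hlap.symm

lemma lgm_deriv (α : ℝ) (f : ℝ → ℝ) (hmeas : Measurable f) (hnn : ∀ x, 0 ≤ f x)
    (hlap : ∀ s > (0:ℝ), ∫ t in Ioi (0:ℝ), Real.exp (-(s * t)) * f t = Real.exp (-(s ^ α)))
    {s : ℝ} (hs : 0 < s) (hα : 0 < α) :
    IntegrableOn (fun t => t * Real.exp (-(s * t)) * f t) (Ioi 0) ∧
    ∫ t in Ioi (0:ℝ), t * Real.exp (-(s * t)) * f t
      = α * s ^ (α - 1) * Real.exp (-(s ^ α)) := by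
  set ν := volume.restrict (Ioi (0:ℝ)) with hν
  set F : ℝ → ℝ → ℝ := fun r t => Real.exp (-(r * t)) * f t with hF
  set F' : ℝ → ℝ → ℝ := fun r t => Real.exp (-(r * t)) * -t * f t with hF'
  have hε : (0:ℝ) < s/4 := by linarith
  have hbound_int : Integrable (fun t => 4/s * (Real.exp (-(s/4 * t)) * f t)) ν :=
    ((lgm_integrable f (hlap (s/4) hε)).const_mul _)
  have key := hasDerivAt_integral_of_dominated_loc_of_deriv_le (μ := ν)
      (F := F) (F' := F') (x₀ := s) (s := Metric.ball s (s/4)) (bound := fun t => 4/s * (Real.exp (-(s/4 * t)) * f t))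
      (Metric.ball_mem_nhds s hε)
      (Eventually.of_forall fun r =>
        ((Real.measurable_exp.comp ((measurable_id.const_mul r).neg)).mul hmeas).aestronglyMeasurable)
      (lgm_integrable f (hlap s hs))
      (((Real.measurable_exp.comp ((measurable_id.const_mul s).neg)).mul
          measurable_id.neg).mul hmeas).aestronglyMeasurable
      ?_ hbound_int ?_
  · obtain ⟨hint, hder⟩ := key
    have heq : (fun r => ∫ t, F r t ∂ν) =ᶠ[nhds s] fun r => Real.exp (-(r ^ α)) := by
      filter_upwards [IsOpen.mem_nhds isOpen_Ioi hs] with r hr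
      exact hlap r hr
    have hder2 : HasDerivAt (fun r => Real.exp (-(r ^ α)))
        (∫ t, F' s t ∂ν) s := hder.congr_of_eventuallyEq heq.symm
    have hder3 : HasDerivAt (fun r : ℝ => Real.exp (-(r ^ α)))
        (Real.exp (-(s ^ α)) * -(α * s ^ (α - 1))) s := by
      have h1 : HasDerivAt (fun r : ℝ => r ^ α) (α * s ^ (α - 1)) s :=
        Real.hasDerivAt_rpow_const (Or.inl hs.ne')
      exact (Real.hasDerivAt_exp _).comp s h1.neg
    have huniq := hder2.unique hder3
    have hneg : (fun t => F' s t) = fun t => -(t * Real.exp (-(s * t)) * f t) := by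
      funext t; simp only [hF']; ring
    constructor
    · exact hint.neg.congr (Eventually.of_forall fun t => by
        simp only [hF', Pi.neg_apply]; ring)
    · have : ∫ t, F' s t ∂ν = -∫ t, t * Real.exp (-(s * t)) * f t ∂ν := by
        rw [hneg, integral_neg]
      rw [this] at huniq
      linarith [huniq]
  · -- bound
    rw [ae_restrict_iff' measurableSet_Ioi]
    refine Eventually.of_forall fun t ht => fun r hr => ?_
    have ht0 : 0 < t := ht
    have hr2 : s/2 ≤ r := by
      have := abs_lt.1 (mem_ball_iff_norm.1 hr)
      linarith [this.1]
    have h1 : t ≤ 4/s * Real.exp (s/4 * t) := by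
      have := Real.add_one_le_exp (s/4 * t)
      have h2 : s/4 * t ≤ Real.exp (s/4 * t) := by linarith
      calc t = 4/s * (s/4 * t) := by field_simp
        _ ≤ 4/s * Real.exp (s/4 * t) := by
            apply mul_le_mul_of_nonneg_left h2 (by positivity)
    have hexp : Real.exp (-(r * t)) ≤ Real.exp (-(s/2 * t)) := by
      apply Real.exp_le_exp.2
      nlinarith
    have : ‖F' r t‖ = t * Real.exp (-(r * t)) * f t := by
      simp only [hF']
      rw [Real.norm_eq_abs, abs_of_nonpos (by nlinarith [mul_nonneg (mul_pos (Real.exp_pos (-(r * t))) ht0).le (hnn t)])]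
      ring
    rw [this]
    calc t * Real.exp (-(r * t)) * f t ≤ t * Real.exp (-(s/2 * t)) * f t := by
          apply mul_le_mul_of_nonneg_right (mul_le_mul_of_nonneg_left hexp ht0.le) (hnn t)
      _ ≤ (4/s * Real.exp (s/4 * t)) * Real.exp (-(s/2 * t)) * f t := by
          apply mul_le_mul_of_nonneg_right (mul_le_mul_of_nonneg_right h1 (Real.exp_pos _).le) (hnn t)
      _ = 4/s * (Real.exp (-(s/4 * t)) * f t) := by
          rw [mul_assoc (4/s), ← Real.exp_add]
          ring_nf
  · -- differentiability
    refine Eventually.of_forall fun t => fun r _ => ?_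
    have h1 : HasDerivAt (fun r : ℝ => Real.exp (-(r * t))) (Real.exp (-(r * t)) * -t) r :=
      (Real.hasDerivAt_exp _).comp r ((hasDerivAt_mul_const t).neg)
    exact h1.mul_const (f t)

lemma lgm_inner (α : ℝ) (f : ℝ → ℝ) (hmeas : Measurable f) (hnn : ∀ x, 0 ≤ f x)
    (hlap : ∀ s > (0:ℝ), ∫ t in Ioi (0:ℝ), Real.exp (-(s * t)) * f t = Real.exp (-(s ^ α)))
    (hα : 0 < α) {s t : ℝ} (hs : 0 < s) (ht : 0 < t) :
    IntegrableOn (fun x => Real.exp (-(s * x)) * x * (f (x * t ^ (-(1/α))) * t ^ (-(1/α)))) (Ioi 0) ∧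
    ∫ x in Ioi (0:ℝ), Real.exp (-(s * x)) * x * (f (x * t ^ (-(1/α))) * t ^ (-(1/α)))
      = α * s ^ (α - 1) * t * Real.exp (-(s ^ α * t)) := by
  set c : ℝ := t ^ (1/α) with hcdef
  have hc : 0 < c := Real.rpow_pos_of_pos ht _
  have hcinv : t ^ (-(1/α)) = c⁻¹ := by
    rw [hcdef, Real.rpow_neg ht.le]
  have hca : c ^ α = t := by
    rw [hcdef, ← Real.rpow_mul ht.le, one_div_mul_cancel hα.ne', Real.rpow_one]
  have hsc : 0 < s * c := mul_pos hs hc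
  obtain ⟨hG_int, hG_val⟩ := lgm_deriv α f hmeas hnn hlap hsc hα
  set G : ℝ → ℝ := fun u => u * Real.exp (-((s*c) * u)) * f u with hGdef
  have hfun : (fun x => Real.exp (-(s * x)) * x * (f (x * t ^ (-(1/α))) * t ^ (-(1/α))))
      = fun x => G (c⁻¹ * x) := by
    funext x
    simp only [hGdef, hcinv]
    rw [mul_comm x c⁻¹]
    have : s * c * (c⁻¹ * x) = s * x := by field_simp
    rw [this]
    ring
  constructor
  · have hI : IntegrableOn (fun x => G (c⁻¹ * x)) (Ioi 0) volume :=
      (integrableOn_Ioi_comp_mul_left_iff G 0 (inv_pos.2 hc)).2 (by simpa using hG_int)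
    rwa [hfun]
  · rw [hfun]
    have := integral_comp_mul_left_Ioi G 0 (inv_pos.2 hc)
    rw [mul_zero] at this
    rw [this, smul_eq_mul, inv_inv]
    rw [hG_val]
    have h1 : (s * c) ^ (α - 1) = s ^ (α - 1) * c ^ (α - 1) := Real.mul_rpow hs.le hc.le
    have h2 : (s * c) ^ α = s ^ α * t := by rw [Real.mul_rpow hs.le hc.le, hca]
    rw [h1, h2]
    have h3 : c * c ^ (α - 1) = t := by
      nth_rewrite 1 [← Real.rpow_one c]
      rw [← Real.rpow_add hc]
      rw [show (1 : ℝ) + (α - 1) = α by ring, hca]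
    calc c * (α * (s ^ (α-1) * c ^ (α-1)) * Real.exp (-(s ^ α * t)))
        = α * s ^ (α-1) * (c * c ^ (α-1)) * Real.exp (-(s ^ α * t)) := by ring
      _ = α * s ^ (α - 1) * t * Real.exp (-(s ^ α * t)) := by rw [h3]

lemma lgm_gamma_int {a r : ℝ} (ha : 0 < a) (hr : 0 < r) :
    IntegrableOn (fun t : ℝ => t ^ (a - 1) * Real.exp (-(r * t))) (Ioi 0) := by
  by_contra h
  have hv := Real.integral_rpow_mul_exp_neg_mul_Ioi ha hr
  rw [MeasureTheory.integral_undef h] at hv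
  have h1 : 0 < (1/r) ^ a * Real.Gamma a :=
    mul_pos (Real.rpow_pos_of_pos (by positivity) _) (Real.Gamma_pos_of_pos ha)
  rw [← hv] at h1; exact lt_irrefl _ h1

lemma lgm_main (α lam : ℝ) (f : ℝ → ℝ) (hmeas : Measurable f) (hnn : ∀ x, 0 ≤ f x)
    (hlap : ∀ s > (0:ℝ), ∫ t in Ioi (0:ℝ), Real.exp (-(s * t)) * f t = Real.exp (-(s ^ α)))
    (hα : 0 < α) (hlam : 0 < lam) {ν s : ℝ} (hν : 0 < ν) (hs : 0 < s) :
    ∫ x in Ioi (0:ℝ), Real.exp (-(s * x)) * (x * (lam ^ ν / Real.Gamma ν *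
        ∫ t in Ioi (0:ℝ), f (x * t ^ (-(1/α))) * t ^ (-(1/α)) * t ^ (ν - 1) * Real.exp (-(lam * t))))
      = α * s ^ (α - 1) * ν * lam ^ ν * (1 / (lam + s ^ α)) ^ (ν + 1) := by
  have hls : 0 < lam + s ^ α := by
    have := Real.rpow_pos_of_pos hs α; linarith
  set m0 := volume.restrict (Ioi (0:ℝ)) with hm0
  set C := lam ^ ν / Real.Gamma ν with hC
  set K : ℝ → ℝ := fun t => t ^ (ν - 1) * Real.exp (-(lam * t)) with hK
  set H : ℝ → ℝ → ℝ := fun x t =>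
    (Real.exp (-(s * x)) * x * (f (x * t ^ (-(1/α))) * t ^ (-(1/α)))) * K t with hH
  have stepA : ∀ x : ℝ, Real.exp (-(s * x)) * (x * (C *
      ∫ t in Ioi (0:ℝ), f (x * t ^ (-(1/α))) * t ^ (-(1/α)) * t ^ (ν - 1) * Real.exp (-(lam * t))))
      = C * ∫ t in Ioi (0:ℝ), H x t := by
    intro x
    have h1 : ∫ t in Ioi (0:ℝ), H x t
        = (Real.exp (-(s * x)) * x) * ∫ t in Ioi (0:ℝ),
            f (x * t ^ (-(1/α))) * t ^ (-(1/α)) * t ^ (ν - 1) * Real.exp (-(lam * t)) := by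
      rw [← integral_const_mul]
      refine integral_congr_ae (Filter.Eventually.of_forall fun t => ?_)
      simp only [hH, hK]; ring
    rw [h1]; ring
  rw [hm0]
  simp_rw [stepA]
  rw [integral_const_mul]
  have hHmeas : Measurable (Function.uncurry H) := by
    simp only [hH, hK, Function.uncurry]
    fun_prop
  have hprod_ae : ∀ᵐ p : ℝ × ℝ ∂(m0.prod m0), 0 < p.1 ∧ 0 < p.2 := by
    rw [hm0, Measure.prod_restrict]
    refine (ae_restrict_iff' (measurableSet_Ioi.prod measurableSet_Ioi)).2
      (Eventually.of_forall fun p hp => ⟨hp.1, hp.2⟩)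
  have hm_ae : ∀ᵐ t ∂m0, t ∈ Ioi (0:ℝ) := by
    rw [hm0]; exact ae_restrict_mem measurableSet_Ioi
  have hH_nonneg : 0 ≤ᵐ[m0.prod m0] Function.uncurry H := by
    filter_upwards [hprod_ae] with p hp
    obtain ⟨hx, ht⟩ := hp
    simp only [Function.uncurry, hH, hK, Pi.zero_apply]
    exact mul_nonneg
      (mul_nonneg (mul_nonneg (Real.exp_pos _).le hx.le)
        (mul_nonneg (hnn _) (Real.rpow_pos_of_pos ht _).le))
      (mul_nonneg (Real.rpow_pos_of_pos ht _).le (Real.exp_pos _).le)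
  have hinner : ∀ t ∈ Ioi (0:ℝ), IntegrableOn (fun x => H x t) (Ioi 0) ∧
      ∫ x in Ioi (0:ℝ), H x t
        = (α * s ^ (α-1)) * (t ^ ((ν+1) - 1) * Real.exp (-((lam + s ^ α) * t))) := by
    intro t ht
    obtain ⟨hi, hv⟩ := lgm_inner α f hmeas hnn hlap hα hs ht
    have ht0 : (0:ℝ) < t := ht
    have h1 : (t:ℝ) ^ (ν - 1) * t = t ^ ((ν+1)-1) := by
      nth_rewrite 2 [← Real.rpow_one t]
      rw [← Real.rpow_add ht0]
      norm_num
    have h2 : Real.exp (-(lam * t)) * Real.exp (-(s ^ α * t)) = Real.exp (-((lam + s ^ α) * t)) := by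
      rw [← Real.exp_add]; ring_nf
    constructor
    · exact hi.mul_const (K t)
    · have : ∫ x in Ioi (0:ℝ), H x t
          = (∫ x in Ioi (0:ℝ),
              Real.exp (-(s * x)) * x * (f (x * t ^ (-(1/α))) * t ^ (-(1/α)))) * K t := by
        rw [← integral_mul_const]
      rw [this, hv]
      simp only [hK]
      calc α * s ^ (α - 1) * t * Real.exp (-(s ^ α * t)) * (t ^ (ν - 1) * Real.exp (-(lam * t)))
          = (α * s ^ (α-1)) * ((t ^ (ν-1) * t) * (Real.exp (-(lam * t)) * Real.exp (-(s ^ α * t)))) := by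
            ring
        _ = _ := by rw [h1, h2]
  have hφ_int : IntegrableOn (fun t : ℝ => t ^ ((ν+1) - 1) * Real.exp (-((lam + s ^ α) * t))) (Ioi 0) :=
    lgm_gamma_int (by linarith) hls
  have hφ_nonneg : 0 ≤ᵐ[m0] fun t : ℝ =>
      (α * s ^ (α-1)) * (t ^ ((ν+1) - 1) * Real.exp (-((lam + s ^ α) * t))) := by
    filter_upwards [hm_ae] with t ht
    have : (0:ℝ) < t := ht
    simp only [Pi.zero_apply]
    positivity
  have hxsec_nonneg : ∀ t ∈ Ioi (0:ℝ), 0 ≤ᵐ[m0] fun x => H x t := by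
    intro t ht
    filter_upwards [hm_ae] with x hx
    simp only [Pi.zero_apply]
    have hx0 : (0:ℝ) < x := hx
    have ht0 : (0:ℝ) < t := ht
    simp only [hH, hK]
    exact mul_nonneg
      (mul_nonneg (mul_nonneg (Real.exp_pos _).le hx0.le)
        (mul_nonneg (hnn _) (Real.rpow_pos_of_pos ht0 _).le))
      (mul_nonneg (Real.rpow_pos_of_pos ht0 _).le (Real.exp_pos _).le)
  have hH_int : Integrable (Function.uncurry H) (m0.prod m0) := by
    refine ⟨hHmeas.aestronglyMeasurable, ?_⟩
    rw [hasFiniteIntegral_iff_ofReal hH_nonneg]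
    rw [MeasureTheory.lintegral_prod_symm _ (hHmeas.ennreal_ofReal.aemeasurable)]
    calc ∫⁻ t, ∫⁻ x, ENNReal.ofReal (Function.uncurry H (x, t)) ∂m0 ∂m0
        = ∫⁻ t, ENNReal.ofReal ((α * s ^ (α-1)) * (t ^ ((ν+1)-1) * Real.exp (-((lam + s^α) * t)))) ∂m0 := by
          rw [hm0]
          refine lintegral_congr_ae ((ae_restrict_iff' measurableSet_Ioi).2
            (Eventually.of_forall fun t ht => ?_))
          obtain ⟨hti, htv⟩ := hinner t ht
          show ∫⁻ x in Ioi (0:ℝ), ENNReal.ofReal (H x t) = _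
          rw [← ofReal_integral_eq_lintegral_ofReal hti (by rw [← hm0]; exact hxsec_nonneg t ht), htv]
      _ = ENNReal.ofReal (∫ t in Ioi (0:ℝ),
            (α * s ^ (α-1)) * (t ^ ((ν+1)-1) * Real.exp (-((lam + s^α) * t)))) := by
          rw [ofReal_integral_eq_lintegral_ofReal (hφ_int.const_mul _) hφ_nonneg, hm0]
      _ < ⊤ := ENNReal.ofReal_lt_top
  have hswap := MeasureTheory.integral_integral_swap hH_int
  rw [hm0] at hswap
  rw [hswap]
  have hfinal : ∫ t in Ioi (0:ℝ), ∫ x in Ioi (0:ℝ), H x t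
      = ∫ t in Ioi (0:ℝ), (α * s ^ (α-1)) * (t ^ ((ν+1)-1) * Real.exp (-((lam + s^α) * t))) := by
    refine integral_congr_ae ((ae_restrict_iff' measurableSet_Ioi).2
      (Eventually.of_forall fun t ht => ?_))
    exact (hinner t ht).2
  rw [hfinal, integral_const_mul,
    Real.integral_rpow_mul_exp_neg_mul_Ioi (by linarith : (0:ℝ) < ν + 1) hls,
    Real.Gamma_add_one hν.ne']
  have hΓ : Real.Gamma ν ≠ 0 := (Real.Gamma_pos_of_pos hν).ne'
  rw [hC]
  field_simp

theorem limit_gamma_mixture (α μ lam : ℝ) (hα : 0 < α) (hα1 : α < 1)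
    (hμ : 0 < μ) (hlam : 0 < lam) (f : ℝ → ℝ)
    (hf_nonneg : ∀ x > (0 : ℝ), 0 ≤ f x)
    (hf_prob : ∫ x in Set.Ioi (0 : ℝ), f x = 1)
    (hf_lt : ∀ s > (0 : ℝ),
      ∫ t in Set.Ioi (0 : ℝ), Real.exp (-(s * t)) * f t = Real.exp (-(s ^ α))) :
    ∀ s > (0 : ℝ),
      Filter.Tendsto
        (fun n : ℕ =>
          (n / μ) *
            ∫ x in Set.Ioi (0 : ℝ),
              Real.exp (-(s * x)) *
                (x * (lam ^ (μ / n) / Real.Gamma (μ / n) *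
                  ∫ t in Set.Ioi (0 : ℝ),
                    f (x * t ^ (-(1 / α))) * t ^ (-(1 / α)) * t ^ (μ / n - 1) *
                      Real.exp (-(lam * t)))))
        Filter.atTop (nhds (α * s ^ (α - 1) / (lam + s ^ α))) := by
  intro s hs
  set m0 := volume.restrict (Ioi (0:ℝ)) with hm0
  -- Step 1: measurable nonneg version of f
  have hint1 : IntegrableOn (fun t => Real.exp (-(1 * t)) * f t) (Ioi 0) :=
    lgm_integrable f (hf_lt 1 one_pos)
  have hfaesm : AEStronglyMeasurable f m0 := by
    have h1 : AEStronglyMeasurable (fun t => Real.exp (-(1 * t)) * f t) m0 :=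
      hint1.aestronglyMeasurable
    have h2 : AEStronglyMeasurable (fun t => Real.exp (1 * t) * (Real.exp (-(1 * t)) * f t)) m0 :=
      ((Real.continuous_exp.comp (continuous_const.mul continuous_id)).aestronglyMeasurable).mul h1
    refine (h2.congr (Eventually.of_forall fun t => ?_))
    show Real.exp (1 * t) * (Real.exp (-(1 * t)) * f t) = f t
    rw [← mul_assoc, ← Real.exp_add]
    simp
  set f₁ : ℝ → ℝ := fun y => max (hfaesm.mk f y) 0 with hf₁
  have hmeas₁ : Measurable f₁ := (hfaesm.stronglyMeasurable_mk.measurable).max measurable_const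
  have hnn₁ : ∀ x, 0 ≤ f₁ x := fun x => le_max_right _ _
  have heq : f =ᵐ[m0] f₁ := by
    filter_upwards [hfaesm.ae_eq_mk, ae_restrict_mem measurableSet_Ioi] with y h1 h2
    rw [hf₁]
    simp only [← h1]
    exact (max_eq_left (hf_nonneg y h2)).symm
  have hlap₁ : ∀ r > (0:ℝ), ∫ t in Ioi (0:ℝ), Real.exp (-(r * t)) * f₁ t = Real.exp (-(r ^ α)) := by
    intro r hr
    rw [← hf_lt r hr]
    exact integral_congr_ae (by filter_upwards [heq] with t ht; rw [ht])
  -- Step 2: null set handling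
  obtain ⟨hEnull⟩ : Nonempty (m0 {y | f y ≠ f₁ y} = 0) := ⟨heq⟩
  set N : Set ℝ := toMeasurable m0 {y | f y ≠ f₁ y} ∩ Ioi 0 with hN
  have hNmeas : MeasurableSet N :=
    (measurableSet_toMeasurable _ _).inter measurableSet_Ioi
  have hNnull : volume N = 0 := by
    have h1 : m0 (toMeasurable m0 {y | f y ≠ f₁ y}) = 0 := by
      rw [measure_toMeasurable]; exact hEnull
    rw [hm0, Measure.restrict_apply (measurableSet_toMeasurable _ _)] at h1
    exact h1
  have hNprop : ∀ y ∈ Ioi (0:ℝ), y ∉ N → f y = f₁ y := by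
    intro y hy hyN
    by_contra hne
    exact hyN ⟨subset_toMeasurable _ _ hne, hy⟩
  -- Step 3: product null set
  set S : Set (ℝ × ℝ) := (fun p : ℝ × ℝ => p.1 * p.2 ^ (-(1/α))) ⁻¹' N with hS
  have hSmeas : MeasurableSet S :=
    hNmeas.preimage (by fun_prop)
  have hSnull : (m0.prod m0) S = 0 := by
    rw [Measure.prod_apply_symm hSmeas]
    have : (fun t => m0 ((fun x => (x, t)) ⁻¹' S)) =ᵐ[m0] 0 := by
      filter_upwards [ae_restrict_mem (μ := volume) (s := Ioi (0:ℝ)) measurableSet_Ioi]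
        with t ht
      have hc : t ^ (-(1/α)) ≠ 0 := (Real.rpow_pos_of_pos ht _).ne'
      have hsec : ((fun x => (x, t)) ⁻¹' S) = (· * t ^ (-(1/α))) ⁻¹' N := rfl
      have h1 : volume ((· * t ^ (-(1/α))) ⁻¹' N) = 0 := by
        rw [Real.volume_preimage_mul_right hc, hNnull, mul_zero]
      simp only [Pi.zero_apply, hsec]
      exact le_antisymm (by rw [hm0]; exact (Measure.restrict_le_self _).trans_eq h1) zero_le
    rw [lintegral_congr_ae this]
    simp
  have hsec_ae : ∀ᵐ x ∂m0, ∀ᵐ t ∂m0, x * t ^ (-(1/α)) ∉ N := by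
    have := (Measure.measure_prod_null hSmeas).1 hSnull
    filter_upwards [this] with x hx
    rw [show Prod.mk x ⁻¹' S = {t | x * t ^ (-(1/α)) ∈ N} from rfl] at hx
    exact (measure_eq_zero_iff_ae_notMem.1 hx)
  -- Step 4: replace f by f₁ in the outer integral
  have hrepl : ∀ ν : ℝ,
      (∫ x in Ioi (0:ℝ), Real.exp (-(s * x)) * (x * (lam ^ ν / Real.Gamma ν *
        ∫ t in Ioi (0:ℝ), f (x * t ^ (-(1/α))) * t ^ (-(1/α)) * t ^ (ν - 1) * Real.exp (-(lam * t)))))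
      = ∫ x in Ioi (0:ℝ), Real.exp (-(s * x)) * (x * (lam ^ ν / Real.Gamma ν *
        ∫ t in Ioi (0:ℝ), f₁ (x * t ^ (-(1/α))) * t ^ (-(1/α)) * t ^ (ν - 1) * Real.exp (-(lam * t)))) := by
    intro ν
    refine integral_congr_ae ?_
    filter_upwards [hsec_ae, ae_restrict_mem (μ := volume) (s := Ioi (0:ℝ)) measurableSet_Ioi]
      with x hx hx0
    have : (∫ t in Ioi (0:ℝ), f (x * t ^ (-(1/α))) * t ^ (-(1/α)) * t ^ (ν - 1) * Real.exp (-(lam * t)))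
        = ∫ t in Ioi (0:ℝ), f₁ (x * t ^ (-(1/α))) * t ^ (-(1/α)) * t ^ (ν - 1) * Real.exp (-(lam * t)) := by
      refine integral_congr_ae ?_
      filter_upwards [hx, ae_restrict_mem (μ := volume) (s := Ioi (0:ℝ)) measurableSet_Ioi]
        with t htN ht0
      have harg : x * t ^ (-(1/α)) ∈ Ioi (0:ℝ) :=
        mul_pos hx0 (Real.rpow_pos_of_pos ht0 _)
      rw [hNprop _ harg htN]
    rw [this]
  -- Step 5: compute and take the limit
  have hls : 0 < lam + s ^ α := by
    have := Real.rpow_pos_of_pos hs α; linarith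
  have hval : ∀ n : ℕ, 1 ≤ n →
      (n / μ) * ∫ x in Ioi (0:ℝ), Real.exp (-(s * x)) * (x * (lam ^ (μ/(n:ℝ)) / Real.Gamma (μ/(n:ℝ)) *
        ∫ t in Ioi (0:ℝ), f (x * t ^ (-(1/α))) * t ^ (-(1/α)) * t ^ (μ/(n:ℝ) - 1) * Real.exp (-(lam * t))))
      = α * s ^ (α - 1) * lam ^ (μ/(n:ℝ)) * (1 / (lam + s ^ α)) ^ (μ/(n:ℝ) + 1) := by
    intro n hn
    have hn0 : (0:ℝ) < n := by exact_mod_cast hn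
    have hν : 0 < μ / (n:ℝ) := div_pos hμ hn0
    rw [hrepl (μ/(n:ℝ)), lgm_main α lam f₁ hmeas₁ hnn₁ hlap₁ hα hlam hν hs]
    field_simp
  have hlim : Tendsto (fun n : ℕ =>
      α * s ^ (α - 1) * lam ^ (μ/(n:ℝ)) * (1 / (lam + s ^ α)) ^ (μ/(n:ℝ) + 1))
      atTop (nhds (α * s ^ (α - 1) / (lam + s ^ α))) := by
    have h0 : Tendsto (fun n : ℕ => μ / (n:ℝ)) atTop (nhds 0) :=
      tendsto_const_div_atTop_nhds_zero_nat μ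
    have h1 : Tendsto (fun n : ℕ => lam ^ (μ/(n:ℝ))) atTop (nhds 1) := by
      have := (tendsto_const_nhds (x := lam) (f := atTop (α := ℕ))).rpow h0 (Or.inl hlam.ne')
      simpa using this
    have h2 : Tendsto (fun n : ℕ => (1 / (lam + s ^ α)) ^ (μ/(n:ℝ) + 1)) atTop
        (nhds (1 / (lam + s ^ α))) := by
      have hb : (1 / (lam + s ^ α)) ≠ 0 := by positivity
      have hadd : Tendsto (fun n : ℕ => μ / (n:ℝ) + 1) atTop (nhds (0 + 1)) :=
        h0.add (tendsto_const_nhds (x := (1:ℝ)))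
      have h2' : Tendsto (fun n : ℕ => (1 / (lam + s ^ α)) ^ (μ/(n:ℝ) + 1)) atTop
          (nhds ((1 / (lam + s ^ α)) ^ ((0:ℝ) + 1))) :=
        Filter.Tendsto.rpow tendsto_const_nhds hadd (Or.inl hb)
      rw [show (0:ℝ)+1 = 1 by norm_num, Real.rpow_one] at h2'
      exact h2'
    have := ((tendsto_const_nhds (x := α * s ^ (α - 1)) (f := atTop (α := ℕ))).mul h1).mul h2
    simp only [mul_one] at this
    convert this using 2
    field_simp
  refine Tendsto.congr' ?_ hlim
  filter_upwards [eventually_ge_atTop 1] with n hn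
  exact (hval n hn).symm
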